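/- Assume that for all i ∈ {0,…,n−1}, X_i admits a density φ_i with respect to Lebesgue measure on ℝ^d with φ_i(x) ≤ κ for all x ∈ [0,1]^d. Then for every ℓ ∈ ℕ* such that 2^{ℓd} ≥ n, inf_{m ∈ 𝓜_ℓ} { d₂²(√s|_A, V_m) + |m| (log n)/n } ≤ 4 · inf_{m ∈ 𝓜_∞} { d₂²(√s|_A, V_m) + |m| (log n)/n }. -/

import Mathlib

open MeasureTheory Real
open scoped ENNReal
noncomputable section
open Classical

/-- Dyadic subinterval of `[0,1]`: `[l/2^j, (l+1)/2^j)`, closed on the right when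
`l + 1 = 2^j`. -/
def dyadicI (j l : ℕ) : Set ℝ :=
  if l + 1 = 2 ^ j then Set.Icc ((l : ℝ) / 2 ^ j) 1
  else Set.Ico ((l : ℝ) / 2 ^ j) (((l : ℝ) + 1) / 2 ^ j)

/-- A dyadic cube of `[0,1]^{2d}` is coded by its level and its multi-index. -/
abbrev CubeIdx (d : ℕ) := ℕ × (Fin (2 * d) → ℕ)

/-- The subset of `[0,1]^{2d}` coded by a cube index. -/
def cubeSet (d : ℕ) (K : CubeIdx d) : Set (Fin (2 * d) → ℝ) :=
  {x | ∀ i, x i ∈ dyadicI K.1 (K.2 i)}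

/-- The `4^d` dyadic children (of half side length) of a dyadic cube. -/
def childrenC (d : ℕ) (K : CubeIdx d) : Finset (CubeIdx d) :=
  (Finset.univ : Finset (Fin (2 * d) → Fin 2)).image
    (fun ε => (K.1 + 1, fun i => 2 * K.2 i + (ε i : ℕ)))

/-- `IsPartOf d ℓ K m` means: `m` is a partition of the dyadic cube `K` into dyadic
cubes, obtained by at most `ℓ` recursive splitting steps (at each step, each current
cube may be split into its `4^d` children). -/
inductive IsPartOf (d : ℕ) : ℕ → CubeIdx d → Finset (CubeIdx d) → Prop
  | leaf (ℓ : ℕ) (K : CubeIdx d) : IsPartOf d ℓ K {K}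
  | node (ℓ : ℕ) (K : CubeIdx d) (f : CubeIdx d → Finset (CubeIdx d))
      (h : ∀ K' ∈ childrenC d K, IsPartOf d ℓ K' (f K')) :
      IsPartOf d (ℓ + 1) K ((childrenC d K).biUnion f)

/-- The root cube, coding `[0,1]^{2d}`. -/
def rootC (d : ℕ) : CubeIdx d := (0, fun _ => 0)

/-- The collection `𝓜_ℓ` of dyadic partitions of `[0,1]^{2d}` built in at most `ℓ` steps. -/
def Mpart (d ℓ : ℕ) : Set (Finset (CubeIdx d)) := {m | IsPartOf d ℓ (rootC d) m}

/-- The collection `𝓜_∞ = ⋃_ℓ 𝓜_ℓ`. -/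
def MpartInf (d : ℕ) : Set (Finset (CubeIdx d)) := ⋃ ℓ, Mpart d ℓ

/-- The collection `𝓜_ℓ` for `ℓ ∈ ℕ ∪ {∞}`. -/
def MpartE (d : ℕ) (ℓ : ℕ∞) : Set (Finset (CubeIdx d)) :=
  if ℓ = ⊤ then MpartInf d else Mpart d ℓ.toNat

/-- Concatenation of two points of `ℝ^d` into a point of `ℝ^{2d}`. -/
def pairPt (d : ℕ) (x y : Fin d → ℝ) : Fin (2 * d) → ℝ :=
  fun i => if h : (i : ℕ) < d then x ⟨i, h⟩
    else y ⟨(i : ℕ) - d, by have := i.isLt; omega⟩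

/-- The indicator function `1_K` of a dyadic cube, as a function on `ℝ^d × ℝ^d`. -/
def indC (d : ℕ) (K : CubeIdx d) (p : (Fin d → ℝ) × (Fin d → ℝ)) : ℝ :=
  (cubeSet d K).indicator (fun _ => (1 : ℝ)) (pairPt d p.1 p.2)

/-- The set `A = [0,1]^d × [0,1]^d` on which the transition density is estimated. -/
def unitSq (d : ℕ) : Set ((Fin d → ℝ) × (Fin d → ℝ)) :=
  (Set.Icc (0 : Fin d → ℝ) 1) ×ˢ (Set.Icc (0 : Fin d → ℝ) 1)

/-- The empirical Hellinger-type squared distance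
`H²(f,f') = (1/(2n)) ∑_{i<n} ∫ (√f(X_i,y) - √f'(X_i,y))² dy`. -/
def hellSq (d : ℕ) {Ω : Type*} (n : ℕ) (X : ℕ → Ω → (Fin d → ℝ)) (ω : Ω)
    (f g : (Fin d → ℝ) × (Fin d → ℝ) → ℝ) : ℝ :=
  (1 / (2 * n)) * ∑ i ∈ Finset.range n,
    ∫ y, (Real.sqrt (f (X i ω, y)) - Real.sqrt (g (X i ω, y))) ^ 2

/-- The test statistic `T(f,f')` (conventions `0/0 = 0` are those of real division). -/
def Tstat (d : ℕ) {Ω : Type*} (n : ℕ) (X : ℕ → Ω → (Fin d → ℝ)) (ω : Ω)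
    (f g : (Fin d → ℝ) × (Fin d → ℝ) → ℝ) : ℝ :=
  (1 / (2 * Real.sqrt 2 * n)) * (∑ i ∈ Finset.range n,
      ∫ y, Real.sqrt (f (X i ω, y) + g (X i ω, y)) *
        (Real.sqrt (g (X i ω, y)) - Real.sqrt (f (X i ω, y))))
  + (1 / (Real.sqrt 2 * n)) * (∑ i ∈ Finset.range n,
      (Real.sqrt (g (X i ω, X (i + 1) ω)) - Real.sqrt (f (X i ω, X (i + 1) ω))) /
        Real.sqrt (f (X i ω, X (i + 1) ω) + g (X i ω, X (i + 1) ω)))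
  + (1 / (2 * n)) * (∑ i ∈ Finset.range n,
      ∫ y, (f (X i ω, y) - g (X i ω, y)))

/-- The histogram estimator `ŝ_m` on a dyadic partition `m` (convention `0/0 = 0`). -/
def histEst (d : ℕ) {Ω : Type*} (n : ℕ) (X : ℕ → Ω → (Fin d → ℝ))
    (m : Finset (CubeIdx d)) (ω : Ω) : (Fin d → ℝ) × (Fin d → ℝ) → ℝ :=
  fun p => ∑ K ∈ m,
    ((∑ i ∈ Finset.range n, indC d K (X i ω, X (i + 1) ω)) /
      (∑ i ∈ Finset.range n, ∫ y, indC d K (X i ω, y))) * indC d K p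

/-- The set `V_m` of nonnegative piecewise constant functions on a dyadic partition `m`. -/
def VmD (d : ℕ) (m : Finset (CubeIdx d)) : Set ((Fin d → ℝ) × (Fin d → ℝ) → ℝ) :=
  {g | ∃ a : CubeIdx d → ℝ, (∀ K ∈ m, 0 ≤ a K) ∧
    g = fun p => ∑ K ∈ m, a K * indC d K p}

/-- `|m' ∨ K|`: the number of nonempty pieces `K' ∩ K`, `K' ∈ m'`. -/
def veeCard (d : ℕ) (m' : Finset (CubeIdx d)) (K : CubeIdx d) : ℕ :=
  ((m'.filter fun K' => (cubeSet d K' ∩ cubeSet d K).Nonempty).image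
    fun K' => cubeSet d K' ∩ cubeSet d K).card

/-- The penalty `L ⬝ c ⬝ log n / n` attached to a cardinality `c`. -/
def penC (L : ℝ) (n : ℕ) (c : ℕ) : ℝ := L * c * Real.log n / n

/-- `α = (1 - 1/√2)/2`. -/
def alphaC : ℝ := (1 - 1 / Real.sqrt 2) / 2

/-- Restriction `f ⬝ 1_{K ∩ K'}`. -/
def restr2 (d : ℕ) (f : (Fin d → ℝ) × (Fin d → ℝ) → ℝ) (K K' : CubeIdx d) :
    (Fin d → ℝ) × (Fin d → ℝ) → ℝ :=
  fun p => f p * indC d K p * indC d K' p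

/-- Restriction `f ⬝ 1_K`. -/
def restr1 (d : ℕ) (f : (Fin d → ℝ) × (Fin d → ℝ) → ℝ) (K : CubeIdx d) :
    (Fin d → ℝ) × (Fin d → ℝ) → ℝ :=
  fun p => f p * indC d K p

/-- The selection criterion `γ`. -/
def gammaSel (d : ℕ) {Ω : Type*} (n : ℕ) (X : ℕ → Ω → (Fin d → ℝ)) (L : ℝ) (ℓ : ℕ∞)
    (ω : Ω) (m : Finset (CubeIdx d)) : ℝ :=
  (∑ K ∈ m, ⨆ m' : MpartE d ℓ,
      ((∑ K' ∈ (m' : Finset (CubeIdx d)),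
          (alphaC * hellSq d n X ω (restr2 d (histEst d n X m ω) K K')
                (restr2 d (histEst d n X (m' : Finset (CubeIdx d)) ω) K K')
            + Tstat d n X ω (restr2 d (histEst d n X m ω) K K')
                (restr2 d (histEst d n X (m' : Finset (CubeIdx d)) ω) K K')))
        - penC L n (veeCard d (m' : Finset (CubeIdx d)) K)))
  + 2 * penC L n m.card

/-- `s ⬝ 1_A`, the target function restricted to `A = [0,1]^{2d}`. -/
def sIndA (d : ℕ) (s : (Fin d → ℝ) → (Fin d → ℝ) → ℝ) :
    (Fin d → ℝ) × (Fin d → ℝ) → ℝ :=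
  (unitSq d).indicator fun p => s p.1 p.2

end

noncomputable section
open Classical

/-- The squared `L²([0,1]^{2d})` distance between `√s` (restricted to `[0,1]^{2d}`) and a
function `g` on `ℝ^d × ℝ^d`. -/
def d2Sq (d : ℕ) (s : (Fin d → ℝ) → (Fin d → ℝ) → ℝ)
    (g : (Fin d → ℝ) × (Fin d → ℝ) → ℝ) : ℝ :=
  ∫ p in unitSq d, (Real.sqrt (s p.1 p.2) - g p) ^ 2

section Geo
open Set

variable {d : ℕ}

lemma dyadicI_subset_Ici (j l : ℕ) : dyadicI j l ⊆ Set.Ici ((l:ℝ)/2^j) := by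
  unfold dyadicI; split
  · exact Set.Icc_subset_Ici_self
  · exact Set.Ico_subset_Ici_self

lemma not_odd_pow (j l : ℕ) : ¬ (2*l+1 = 2^(j+1)) := by
  have : 2^(j+1) = 2*2^j := by ring
  omega

lemma dyadicI_union (j l : ℕ) :
    dyadicI (j+1) (2*l) ∪ dyadicI (j+1) (2*l+1) = dyadicI j l := by
  have h2 : (0:ℝ) < (2:ℝ)^j := by positivity
  have h2' : (0:ℝ) < (2:ℝ)^(j+1) := by positivity
  have hc0 : ¬ ((2*l) + 1 = 2^(j+1)) := not_odd_pow j l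
  have key : ((2*l : ℕ):ℝ)/2^(j+1) = (l:ℝ)/2^j := by
    push_cast; rw [div_eq_div_iff (by positivity) (by positivity)]; ring
  by_cases h : l + 1 = 2^j
  · have hc1 : (2*l+1) + 1 = 2^(j+1) := by
      have : 2^(j+1) = 2*2^j := by ring
      omega
    unfold dyadicI
    rw [if_neg hc0, if_pos hc1, if_pos h]
    have hm : ((2*l:ℕ):ℝ) + 1 = ((2*l+1 : ℕ):ℝ) := by push_cast; ring
    rw [hm, key]
    refine Set.Ico_union_Icc_eq_Icc ?_ ?_
    · rw [← key]
      exact (div_le_div_iff_of_pos_right h2').mpr ((Nat.cast_le (α:=ℝ)).mpr (Nat.le_succ (2*l)))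
    · rw [div_le_one h2']
      have : (2*l+1 : ℕ) ≤ 2^(j+1) := by omega
      exact_mod_cast this
  · have hc1 : ¬ ((2*l+1) + 1 = 2^(j+1)) := by
      have : 2^(j+1) = 2*2^j := by ring
      omega
    unfold dyadicI
    rw [if_neg hc0, if_neg hc1, if_neg h]
    have hm : ((2*l:ℕ):ℝ) + 1 = ((2*l+1 : ℕ):ℝ) := by push_cast; ring
    have hb : (((2*l+1:ℕ):ℝ) + 1)/2^(j+1) = ((l:ℝ)+1)/2^j := by
      push_cast; rw [div_eq_div_iff (by positivity) (by positivity)]; ring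
    rw [hm, key, hb]
    refine Set.Ico_union_Ico_eq_Ico ?_ ?_
    · rw [← key]
      exact (div_le_div_iff_of_pos_right h2').mpr ((Nat.cast_le (α:=ℝ)).mpr (Nat.le_succ (2*l)))
    · rw [← hb]
      exact (div_le_div_iff_of_pos_right h2').mpr (by push_cast; linarith)

lemma mem_dyadicI_iff (j l : ℕ) (x : ℝ) :
    x ∈ dyadicI j l ↔ x ∈ dyadicI (j+1) (2*l) ∨ x ∈ dyadicI (j+1) (2*l+1) := by
  rw [← dyadicI_union j l]; simp

lemma dyadicI_succ_disjoint (j l : ℕ) :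
    Disjoint (dyadicI (j+1) (2*l)) (dyadicI (j+1) (2*l+1)) := by
  rw [Set.disjoint_left]
  intro x h0 h1
  have h1' : ((2*l+1 : ℕ):ℝ)/2^(j+1) ≤ x := dyadicI_subset_Ici _ _ h1
  have h0' : x < ((2*l:ℕ):ℝ)/2^(j+1) + 1/2^(j+1) := by
    unfold dyadicI at h0
    rw [if_neg (not_odd_pow j l)] at h0
    have := h0.2
    rw [← add_div]
    linarith [h0.2]
  have : ((2*l+1 : ℕ):ℝ) = ((2*l:ℕ):ℝ) + 1 := by push_cast; ring
  rw [this, add_div] at h1'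
  linarith
end Geo

section Cube
open Set

variable {d : ℕ}

lemma mem_childrenC {K C : CubeIdx d} :
    C ∈ childrenC d K ↔ ∃ ε : Fin (2*d) → Fin 2,
      C = (K.1+1, fun i => 2 * K.2 i + (ε i : ℕ)) := by
  simp [childrenC, eq_comm]

lemma childrenC_level {K C : CubeIdx d} (h : C ∈ childrenC d K) : C.1 = K.1 + 1 := by
  obtain ⟨ε, rfl⟩ := mem_childrenC.1 h; rfl

lemma fin2_val (e : Fin 2) : (e:ℕ) = 0 ∨ (e:ℕ) = 1 := by omega

lemma cubeSet_child_subset {K C : CubeIdx d} (h : C ∈ childrenC d K) :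
    cubeSet d C ⊆ cubeSet d K := by
  obtain ⟨ε, rfl⟩ := mem_childrenC.1 h
  intro x hx i
  have hxi : x i ∈ dyadicI (K.1+1) (2 * K.2 i + (ε i : ℕ)) := hx i
  rw [mem_dyadicI_iff]
  rcases fin2_val (ε i) with he | he <;> rw [he] at hxi
  · left; simpa using hxi
  · right; simpa using hxi

lemma cubeSet_children_disjoint {K C₁ C₂ : CubeIdx d} (h1 : C₁ ∈ childrenC d K)
    (h2 : C₂ ∈ childrenC d K) (hne : C₁ ≠ C₂) :
    Disjoint (cubeSet d C₁) (cubeSet d C₂) := by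
  obtain ⟨ε₁, rfl⟩ := mem_childrenC.1 h1
  obtain ⟨ε₂, rfl⟩ := mem_childrenC.1 h2
  have : ∃ i, ε₁ i ≠ ε₂ i := by
    by_contra hc
    push_neg at hc
    exact hne (by simp [funext hc])
  obtain ⟨i, hi⟩ := this
  rw [Set.disjoint_left]
  intro x hx1 hx2
  have h1i : x i ∈ dyadicI (K.1+1) (2 * K.2 i + (ε₁ i : ℕ)) := hx1 i
  have h2i : x i ∈ dyadicI (K.1+1) (2 * K.2 i + (ε₂ i : ℕ)) := hx2 i
  have hD := dyadicI_succ_disjoint K.1 (K.2 i)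
  rcases fin2_val (ε₁ i) with he1 | he1 <;> rcases fin2_val (ε₂ i) with he2 | he2 <;>
    rw [he1] at h1i <;> rw [he2] at h2i
  · exact hi (Fin.ext (by omega))
  · exact Set.disjoint_left.1 hD (by simpa using h1i) (by simpa using h2i)
  · exact Set.disjoint_left.1 hD (by simpa using h2i) (by simpa using h1i)
  · exact hi (Fin.ext (by omega))

lemma cubeSet_children_cover {K : CubeIdx d} {x : Fin (2*d) → ℝ} (hx : x ∈ cubeSet d K) :
    ∃ C ∈ childrenC d K, x ∈ cubeSet d C := by
  classical
  set ε : Fin (2*d) → Fin 2 :=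
    fun i => if x i ∈ dyadicI (K.1+1) (2 * K.2 i) then 0 else 1 with hε
  refine ⟨(K.1+1, fun i => 2 * K.2 i + (ε i : ℕ)), mem_childrenC.2 ⟨ε, rfl⟩, ?_⟩
  intro i
  by_cases h : x i ∈ dyadicI (K.1+1) (2 * K.2 i)
  · simpa [hε, h] using h
  · have := (mem_dyadicI_iff K.1 (K.2 i) (x i)).1 (hx i)
    rcases this with h' | h'
    · exact absurd h' h
    · simpa [hε, h] using h'

lemma cubeSet_nonempty (K : CubeIdx d) : (cubeSet d K).Nonempty := by
  refine ⟨fun i => (K.2 i : ℝ)/2^K.1, fun i => ?_⟩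
  show ((K.2 i : ℝ)/2^K.1) ∈ dyadicI K.1 (K.2 i)
  unfold dyadicI
  split
  · next h =>
    refine ⟨le_refl _, ?_⟩
    rw [div_le_one (by positivity)]
    exact_mod_cast (by omega : K.2 i ≤ 2^K.1)
  · exact ⟨le_refl _,
      (div_lt_div_iff_of_pos_right (by positivity)).mpr (by linarith)⟩

lemma IsPartOf.subset_cube {ℓ : ℕ} {K : CubeIdx d} {m : Finset (CubeIdx d)}
    (h : IsPartOf d ℓ K m) : ∀ K' ∈ m, cubeSet d K' ⊆ cubeSet d K := by
  induction h with
  | leaf ℓ K => intro K' hK'; rw [Finset.mem_singleton] at hK'; subst hK'; exact subset_rfl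
  | node ℓ K f hf IH =>
    intro K' hK'
    rw [Finset.mem_biUnion] at hK'
    obtain ⟨C, hC, hK'⟩ := hK'
    exact (IH C hC K' hK').trans (cubeSet_child_subset hC)

lemma IsPartOf.cover {ℓ : ℕ} {K : CubeIdx d} {m : Finset (CubeIdx d)}
    (h : IsPartOf d ℓ K m) : ∀ x ∈ cubeSet d K, ∃ K' ∈ m, x ∈ cubeSet d K' := by
  induction h with
  | leaf ℓ K => intro x hx; exact ⟨K, Finset.mem_singleton_self K, hx⟩
  | node ℓ K f hf IH =>
    intro x hx
    obtain ⟨C, hC, hxC⟩ := cubeSet_children_cover hx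
    obtain ⟨K', hK', hxK'⟩ := IH C hC x hxC
    exact ⟨K', Finset.mem_biUnion.2 ⟨C, hC, hK'⟩, hxK'⟩

lemma IsPartOf.disj {ℓ : ℕ} {K : CubeIdx d} {m : Finset (CubeIdx d)}
    (h : IsPartOf d ℓ K m) : ∀ K₁ ∈ m, ∀ K₂ ∈ m, K₁ ≠ K₂ →
      Disjoint (cubeSet d K₁) (cubeSet d K₂) := by
  induction h with
  | leaf ℓ K =>
    intro K₁ h1 K₂ h2 hne
    rw [Finset.mem_singleton] at h1 h2
    exact absurd (h1.trans h2.symm) hne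
  | node ℓ K f hf IH =>
    intro K₁ h1 K₂ h2 hne
    rw [Finset.mem_biUnion] at h1 h2
    obtain ⟨C₁, hC₁, h1⟩ := h1
    obtain ⟨C₂, hC₂, h2⟩ := h2
    by_cases hC : C₁ = C₂
    · subst hC; exact IH C₁ hC₁ K₁ h1 K₂ h2 hne
    · exact (cubeSet_children_disjoint hC₁ hC₂ hC).mono
        ((hf C₁ hC₁).subset_cube K₁ h1) ((hf C₂ hC₂).subset_cube K₂ h2)

lemma IsPartOf.nonempty {ℓ : ℕ} {K : CubeIdx d} {m : Finset (CubeIdx d)}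
    (h : IsPartOf d ℓ K m) : m.Nonempty := by
  induction h with
  | leaf ℓ K => exact ⟨K, Finset.mem_singleton_self K⟩
  | node ℓ K f hf IH =>
    have hc : (childrenC d K).Nonempty :=
      Finset.image_nonempty.2 Finset.univ_nonempty
    obtain ⟨C, hC⟩ := hc
    obtain ⟨K', hK'⟩ := IH C hC
    exact ⟨K', Finset.mem_biUnion.2 ⟨C, hC, hK'⟩⟩

lemma IsPartOf.trunc {ℓ₀ : ℕ} {K : CubeIdx d} {m : Finset (CubeIdx d)}
    (h : IsPartOf d ℓ₀ K m) :
    ∀ t, ∃ m', IsPartOf d t K m' ∧ m'.card ≤ m.card ∧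
      ∀ K' ∈ m', K' ∈ m ∨ K'.1 = K.1 + t := by
  induction h with
  | leaf ℓ K =>
    intro t
    exact ⟨{K}, IsPartOf.leaf t K, le_rfl, fun K' hK' => Or.inl hK'⟩
  | node ℓ K f hf IH =>
    intro t
    cases t with
    | zero =>
      refine ⟨{K}, IsPartOf.leaf 0 K, ?_, ?_⟩
      · simpa using Finset.card_pos.mpr (IsPartOf.node ℓ K f hf).nonempty
      · intro K' hK'
        rw [Finset.mem_singleton] at hK'
        subst hK'; exact Or.inr rfl
    | succ t =>
      choose g hg1 hg2 hg3 using fun C hC => IH C hC t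
      classical
      refine ⟨(childrenC d K).biUnion
        (fun C => if hC : C ∈ childrenC d K then g C hC else ∅), ?_, ?_, ?_⟩
      · exact IsPartOf.node t K _ (fun C hC => by rw [dif_pos hC]; exact hg1 C hC)
      · calc ((childrenC d K).biUnion
            (fun C => if hC : C ∈ childrenC d K then g C hC else ∅)).card
            ≤ ∑ C ∈ childrenC d K,
              (if hC : C ∈ childrenC d K then g C hC else ∅).card :=
              Finset.card_biUnion_le
          _ ≤ ∑ C ∈ childrenC d K, (f C).card := by
              refine Finset.sum_le_sum fun C hC => ?_
              rw [dif_pos hC]; exact hg2 C hC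
          _ = ((childrenC d K).biUnion f).card := by
              refine (Finset.card_biUnion ?_).symm
              intro C₁ hC₁ C₂ hC₂ hne
              rw [Function.onFun, Finset.disjoint_left]
              intro K' h1 h2
              obtain ⟨x, hx⟩ := cubeSet_nonempty K'
              exact Set.disjoint_left.1
                ((cubeSet_children_disjoint hC₁ hC₂ hne).mono
                  ((hf C₁ hC₁).subset_cube K' h1) ((hf C₂ hC₂).subset_cube K' h2))
                hx hx
      · intro K' hK'
        rw [Finset.mem_biUnion] at hK'
        obtain ⟨C, hC, hK'⟩ := hK'
        rw [dif_pos hC] at hK'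
        rcases hg3 C hC K' hK' with h | h
        · exact Or.inl (Finset.mem_biUnion.2 ⟨C, hC, h⟩)
        · right; rw [h, childrenC_level hC]; omega

lemma mem_cubeSet_rootC {p : (Fin d → ℝ) × (Fin d → ℝ)} (hp : p ∈ unitSq d) :
    pairPt d p.1 p.2 ∈ cubeSet d (rootC d) := by
  intro i
  have h1 : dyadicI 0 0 = Set.Icc (0:ℝ) 1 := by
    unfold dyadicI; norm_num
  rw [rootC]
  simp only []
  rw [h1]
  obtain ⟨hp1, hp2⟩ := hp
  rw [Set.mem_Icc] at hp1 hp2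
  unfold pairPt
  split
  · exact ⟨hp1.1 _, hp1.2 _⟩
  · exact ⟨hp2.1 _, hp2.2 _⟩
end Cube

section Meas
open MeasureTheory

variable {d : ℕ}

lemma indC_nonneg (K : CubeIdx d) (p) : 0 ≤ indC d K p :=
  Set.indicator_nonneg (fun _ _ => zero_le_one) _

lemma indC_le_one (K : CubeIdx d) (p) : indC d K p ≤ 1 := by
  unfold indC
  by_cases h : pairPt d p.1 p.2 ∈ cubeSet d K <;> simp [h]

lemma indC_of_mem {K : CubeIdx d} {p} (h : pairPt d p.1 p.2 ∈ cubeSet d K) :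
    indC d K p = 1 := by unfold indC; rw [Set.indicator_of_mem h]

lemma indC_of_not_mem {K : CubeIdx d} {p} (h : pairPt d p.1 p.2 ∉ cubeSet d K) :
    indC d K p = 0 := by unfold indC; rw [Set.indicator_of_notMem h]

lemma measurable_pairPt :
    Measurable (fun p : (Fin d → ℝ) × (Fin d → ℝ) => pairPt d p.1 p.2) := by
  apply measurable_pi_lambda
  intro i
  rcases Nat.lt_or_ge (i : ℕ) d with h | h
  · simp only [pairPt, dif_pos h]
    exact (measurable_pi_apply _).comp measurable_fst
  · simp only [pairPt, dif_neg (not_lt.2 h)]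
    exact (measurable_pi_apply _).comp measurable_snd

lemma measurableSet_dyadicI (j l : ℕ) : MeasurableSet (dyadicI j l) := by
  unfold dyadicI; split
  · exact measurableSet_Icc
  · exact measurableSet_Ico

lemma cubeSet_eq_pi (K : CubeIdx d) :
    cubeSet d K = Set.pi Set.univ (fun i => dyadicI K.1 (K.2 i)) := by
  ext x; simp [cubeSet, Set.mem_pi]

lemma measurableSet_cubeSet (K : CubeIdx d) : MeasurableSet (cubeSet d K) := by
  rw [cubeSet_eq_pi]
  exact MeasurableSet.univ_pi (fun i => measurableSet_dyadicI _ _)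

lemma measurable_indC (K : CubeIdx d) : Measurable (indC d K) := by
  have : indC d K = Set.indicator
      ((fun p : (Fin d → ℝ) × (Fin d → ℝ) => pairPt d p.1 p.2) ⁻¹' cubeSet d K)
      (fun _ => (1:ℝ)) := by
    ext p
    by_cases h : pairPt d p.1 p.2 ∈ cubeSet d K
    · rw [indC_of_mem h]; simp [Set.indicator_apply, h]
    · rw [indC_of_not_mem h]; simp [Set.indicator_apply, h]
  rw [this]
  exact measurable_const.indicator (measurable_pairPt (measurableSet_cubeSet K))

lemma measurableSet_unitSq : MeasurableSet (unitSq d) :=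
  measurableSet_Icc.prod measurableSet_Icc

lemma volume_unitSq_lt_top : volume (unitSq d) < ⊤ :=
  (isCompact_Icc.prod isCompact_Icc).measure_lt_top

instance : IsFiniteMeasure (volume.restrict (unitSq d)) :=
  ⟨by rw [Measure.restrict_apply_univ]; exact volume_unitSq_lt_top⟩

lemma volume_dyadicI (j l : ℕ) :
    volume (dyadicI j l) = ENNReal.ofReal ((1:ℝ)/2^j) := by
  unfold dyadicI; split
  · next h =>
    have hl : (l:ℝ) + 1 = 2^j := by exact_mod_cast h
    rw [Real.volume_Icc]
    congr 1
    field_simp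
    linarith
  · rw [Real.volume_Ico]
    congr 1
    rw [div_sub_div_same]
    congr 1
    ring

lemma volume_pi_dyadic (j : ℕ) (c : Fin d → ℕ) :
    volume {x : Fin d → ℝ | ∀ i, x i ∈ dyadicI j (c i)}
      = ENNReal.ofReal ((1:ℝ)/2^(j*d)) := by
  have he : {x : Fin d → ℝ | ∀ i, x i ∈ dyadicI j (c i)}
      = Set.pi Set.univ (fun i => dyadicI j (c i)) := by
    ext x; simp [Set.mem_pi]
  rw [he, volume_pi_pi]
  simp only [volume_dyadicI]
  rw [Finset.prod_const, Finset.card_univ, Fintype.card_fin,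
    ← ENNReal.ofReal_pow (by positivity)]
  congr 1
  rw [div_pow, one_pow, ← pow_mul]

variable {s : (Fin d → ℝ) → (Fin d → ℝ) → ℝ}

lemma integrable_s_section (hs1 : ∀ x, ∫ y, s x y = 1) (x : Fin d → ℝ) :
    Integrable (fun y => s x y) := by
  by_contra hI
  have := hs1 x
  rw [integral_undef hI] at this
  norm_num at this

lemma lint_s_section (hs0 : ∀ x y, 0 ≤ s x y) (hs1 : ∀ x, ∫ y, s x y = 1)
    (x : Fin d → ℝ) : ∫⁻ y, ENNReal.ofReal (s x y) = 1 := by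
  rw [← ofReal_integral_eq_lintegral_ofReal (integrable_s_section hs1 x)
    (Filter.Eventually.of_forall (hs0 x)), hs1 x, ENNReal.ofReal_one]

lemma lint_slice (hsm : Measurable (Function.uncurry s)) (hs0 : ∀ x y, 0 ≤ s x y)
    (hs1 : ∀ x, ∫ y, s x y = 1) (T : Set (Fin d → ℝ)) (hT : MeasurableSet T) :
    ∫⁻ p in T ×ˢ (Set.univ : Set (Fin d → ℝ)), ENNReal.ofReal (s p.1 p.2) = volume T := by
  have h1 : (volume : Measure ((Fin d → ℝ) × (Fin d → ℝ)))
      = (volume : Measure (Fin d → ℝ)).prod volume := rfl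
  have hmeas : Measurable (fun p : (Fin d → ℝ) × (Fin d → ℝ) =>
      ENNReal.ofReal (s p.1 p.2)) := ENNReal.measurable_ofReal.comp hsm
  rw [h1, ← Measure.prod_restrict, Measure.restrict_univ,
    lintegral_prod _ hmeas.aemeasurable]
  simp only [lint_s_section hs0 hs1]
  rw [lintegral_one, Measure.restrict_apply_univ]

lemma integrable_s_unitSq (hsm : Measurable (Function.uncurry s))
    (hs0 : ∀ x y, 0 ≤ s x y) (hs1 : ∀ x, ∫ y, s x y = 1) :
    IntegrableOn (fun p : (Fin d → ℝ) × (Fin d → ℝ) => s p.1 p.2) (unitSq d) volume := by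
  have hm : Measurable (fun p : (Fin d → ℝ) × (Fin d → ℝ) => s p.1 p.2) := hsm
  refine ⟨hm.aestronglyMeasurable, ?_⟩
  refine (hasFiniteIntegral_iff_ofReal
    (Filter.Eventually.of_forall (fun p : (Fin d → ℝ) × (Fin d → ℝ) => hs0 p.1 p.2))).mpr ?_
  calc ∫⁻ p in unitSq d, ENNReal.ofReal (s p.1 p.2)
      ≤ ∫⁻ p in (Set.Icc (0 : Fin d → ℝ) 1) ×ˢ (Set.univ : Set (Fin d → ℝ)),
        ENNReal.ofReal (s p.1 p.2) := by
        apply lintegral_mono_set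
        rintro ⟨x, y⟩ ⟨hx, _⟩
        exact ⟨hx, Set.mem_univ _⟩
    _ = volume (Set.Icc (0 : Fin d → ℝ) 1) := lint_slice hsm hs0 hs1 _ measurableSet_Icc
    _ < ⊤ := isCompact_Icc.measure_lt_top

lemma bound_indC (hsm : Measurable (Function.uncurry s)) (hs0 : ∀ x y, 0 ≤ s x y)
    (hs1 : ∀ x, ∫ y, s x y = 1) (hd : 0 < d) (K : CubeIdx d) :
    ∫ p in unitSq d, s p.1 p.2 * indC d K p ≤ (1:ℝ)/2^(K.1 * d) := by
  set f := fun p : (Fin d → ℝ) × (Fin d → ℝ) => s p.1 p.2 * indC d K p with hf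
  by_cases hI : IntegrableOn f (unitSq d) volume
  · have h0 : ∀ p, 0 ≤ f p := fun p => mul_nonneg (hs0 _ _) (indC_nonneg _ _)
    have hle : d ≤ 2 * d := by omega
    set Sx : Set (Fin d → ℝ) :=
      {x | ∀ i, x i ∈ dyadicI K.1 (K.2 (Fin.castLE hle i))} with hSx
    have hSxm : MeasurableSet Sx := by
      have : Sx = Set.pi Set.univ (fun i => dyadicI K.1 (K.2 (Fin.castLE hle i))) := by
        ext x; simp [hSx, Set.mem_pi]
      rw [this]; exact MeasurableSet.univ_pi (fun i => measurableSet_dyadicI _ _)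
    have hptw : ∀ p, ENNReal.ofReal (f p) ≤
        Set.indicator (Sx ×ˢ (Set.univ : Set (Fin d → ℝ)))
          (fun p => ENNReal.ofReal (s p.1 p.2)) p := by
      intro p
      by_cases hp : pairPt d p.1 p.2 ∈ cubeSet d K
      · have hmem : p ∈ Sx ×ˢ (Set.univ : Set (Fin d → ℝ)) := by
          refine ⟨?_, Set.mem_univ _⟩
          intro i
          have h' : (↑(Fin.castLE hle i) : ℕ) < d := i.isLt
          have := hp (Fin.castLE hle i)
          unfold pairPt at this
          rw [dif_pos h'] at this
          exact this
        rw [Set.indicator_of_mem hmem]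
        apply ENNReal.ofReal_le_ofReal
        calc f p ≤ s p.1 p.2 * 1 :=
            mul_le_mul_of_nonneg_left (indC_le_one _ _) (hs0 _ _)
          _ = s p.1 p.2 := mul_one _
      · have : f p = 0 := by rw [hf]; simp [indC_of_not_mem hp]
        rw [this]; simp
    have key : ENNReal.ofReal (∫ p in unitSq d, f p)
        ≤ ENNReal.ofReal ((1:ℝ)/2^(K.1 * d)) := by
      rw [ofReal_integral_eq_lintegral_ofReal hI (Filter.Eventually.of_forall h0)]
      calc ∫⁻ p in unitSq d, ENNReal.ofReal (f p)
          ≤ ∫⁻ p in unitSq d, Set.indicator (Sx ×ˢ (Set.univ : Set (Fin d → ℝ)))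
            (fun p => ENNReal.ofReal (s p.1 p.2)) p := lintegral_mono hptw
        _ ≤ ∫⁻ p, Set.indicator (Sx ×ˢ (Set.univ : Set (Fin d → ℝ)))
            (fun p => ENNReal.ofReal (s p.1 p.2)) p := setLIntegral_le_lintegral _ _
        _ = ∫⁻ p in Sx ×ˢ (Set.univ : Set (Fin d → ℝ)), ENNReal.ofReal (s p.1 p.2) :=
            lintegral_indicator (hSxm.prod MeasurableSet.univ) _
        _ = volume Sx := lint_slice hsm hs0 hs1 _ hSxm
        _ = ENNReal.ofReal ((1:ℝ)/2^(K.1 * d)) := volume_pi_dyadic _ _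
    exact (ENNReal.ofReal_le_ofReal_iff (by positivity)).1 key
  · rw [integral_undef hI]; positivity

lemma integrable_s_indC (hsm : Measurable (Function.uncurry s))
    (hs0 : ∀ x y, 0 ≤ s x y) (hs1 : ∀ x, ∫ y, s x y = 1) (K : CubeIdx d) :
    IntegrableOn (fun p : (Fin d → ℝ) × (Fin d → ℝ) => s p.1 p.2 * indC d K p)
      (unitSq d) volume := by
  refine Integrable.mono' (integrable_s_unitSq hsm hs0 hs1)
    ((hsm.mul (measurable_indC K)).aestronglyMeasurable) ?_
  refine Filter.Eventually.of_forall (fun p => ?_)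
  rw [Real.norm_eq_abs, abs_of_nonneg (mul_nonneg (hs0 _ _) (indC_nonneg _ _))]
  calc s p.1 p.2 * indC d K p ≤ s p.1 p.2 * 1 :=
      mul_le_mul_of_nonneg_left (indC_le_one _ _) (hs0 _ _)
    _ = s p.1 p.2 := mul_one _

lemma measurable_pc (a : CubeIdx d → ℝ) (m : Finset (CubeIdx d)) :
    Measurable (fun p : (Fin d → ℝ) × (Fin d → ℝ) => ∑ K ∈ m, a K * indC d K p) :=
  Finset.measurable_sum m (fun K _ => (measurable_indC K).const_mul (a K))

lemma integrable_Fg (hsm : Measurable (Function.uncurry s))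
    (hs0 : ∀ x y, 0 ≤ s x y) (hs1 : ∀ x, ∫ y, s x y = 1)
    (a : CubeIdx d → ℝ) (m : Finset (CubeIdx d)) :
    IntegrableOn (fun p : (Fin d → ℝ) × (Fin d → ℝ) =>
      (Real.sqrt (s p.1 p.2) - ∑ K ∈ m, a K * indC d K p)^2) (unitSq d) volume := by
  set C := ∑ K ∈ m, |a K| with hC
  have hgK : ∀ p, |∑ K ∈ m, a K * indC d K p| ≤ C := by
    intro p
    calc |∑ K ∈ m, a K * indC d K p| ≤ ∑ K ∈ m, |a K * indC d K p| :=
        Finset.abs_sum_le_sum_abs _ _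
      _ ≤ ∑ K ∈ m, |a K| := by
          refine Finset.sum_le_sum (fun K _ => ?_)
          rw [abs_mul, abs_of_nonneg (indC_nonneg _ _)]
          calc |a K| * indC d K p ≤ |a K| * 1 :=
              mul_le_mul_of_nonneg_left (indC_le_one _ _) (abs_nonneg _)
            _ = |a K| := mul_one _
    
  have hFm : Measurable (fun p : (Fin d → ℝ) × (Fin d → ℝ) =>
      (Real.sqrt (s p.1 p.2) - ∑ K ∈ m, a K * indC d K p)^2) :=
    ((Real.continuous_sqrt.measurable.comp hsm).sub (measurable_pc a m)).pow_const 2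
  refine Integrable.mono'
    (g := fun p => 2 * s p.1 p.2 + 2 * C^2) ?_ hFm.aestronglyMeasurable ?_
  · exact ((integrable_s_unitSq hsm hs0 hs1).const_mul 2).add (integrable_const _)
  · refine Filter.Eventually.of_forall (fun p => ?_)
    rw [Real.norm_eq_abs, abs_of_nonneg (sq_nonneg _)]
    have h1 : Real.sqrt (s p.1 p.2)^2 = s p.1 p.2 := Real.sq_sqrt (hs0 _ _)
    have h2 := hgK p
    have h3 := sq_abs (∑ K ∈ m, a K * indC d K p)
    have h4 : (∑ K ∈ m, a K * indC d K p)^2 ≤ C^2 := by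
      nlinarith [mul_self_le_mul_self (abs_nonneg (∑ K ∈ m, a K * indC d K p)) h2]
    show (Real.sqrt (s p.1 p.2) - ∑ K ∈ m, a K * indC d K p)^2
      ≤ 2 * s p.1 p.2 + 2 * C^2
    nlinarith [sq_nonneg (Real.sqrt (s p.1 p.2) + ∑ K ∈ m, a K * indC d K p)]

lemma sum_pc_eval {m : Finset (CubeIdx d)}
    (hdisj : ∀ K₁ ∈ m, ∀ K₂ ∈ m, K₁ ≠ K₂ → Disjoint (cubeSet d K₁) (cubeSet d K₂))
    (c : CubeIdx d → ℝ) {K₀ : CubeIdx d} (hK₀ : K₀ ∈ m)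
    {p : (Fin d → ℝ) × (Fin d → ℝ)} (hp : pairPt d p.1 p.2 ∈ cubeSet d K₀) :
    ∑ K ∈ m, c K * indC d K p = c K₀ := by
  rw [Finset.sum_eq_single K₀]
  · rw [indC_of_mem hp, mul_one]
  · intro K hK hne
    rw [indC_of_not_mem (fun hmem =>
      (Set.disjoint_left.1 (hdisj K hK K₀ hK₀ hne)) hmem hp), mul_zero]
  · intro h; exact absurd hK₀ h

lemma d2Sq_nonneg (g : (Fin d → ℝ) × (Fin d → ℝ) → ℝ) : 0 ≤ d2Sq d s g :=
  integral_nonneg (fun p => sq_nonneg _)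
end Meas

/-- **Claim 5 of the paper.** If every `X_i`, `i < n`, has a density bounded
by `κ` on `[0,1]^d`, then for every `ℓ` with `2^{ℓd} ≥ n`,
`inf_{m ∈ 𝓜_ℓ} { d₂²(√s|_A, V_m) + |m| log n / n }
  ≤ 4 inf_{m ∈ 𝓜_∞} { d₂²(√s|_A, V_m) + |m| log n / n }`. -/
theorem stmt_19
    (d : ℕ) (hd : 0 < d)
    {Ω : Type} [MeasurableSpace Ω] (P : Measure Ω) [IsProbabilityMeasure P]
    (n : ℕ) (hn : 3 < n)
    (X : ℕ → Ω → (Fin d → ℝ)) (hX : ∀ i, Measurable (X i))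
    (s : (Fin d → ℝ) → (Fin d → ℝ) → ℝ)
    (hsm : Measurable (Function.uncurry s)) (hs0 : ∀ x y, 0 ≤ s x y)
    (hs1 : ∀ x, ∫ y, s x y = 1)
    (hMarkov : ∀ i, i < n → ∀ g : (Fin d → ℝ) → ℝ, Measurable g → (∃ c, ∀ x, |g x| ≤ c) →
      P[(fun ω => g (X (i + 1) ω)) |
          ⨆ k ∈ Finset.range (i + 1), MeasurableSpace.comap (X k) inferInstance]
        =ᵐ[P] fun ω => ∫ y, g y * s (X i ω) y)
    (κ : ℝ) (hκ : 0 < κ)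
    (φ : ℕ → (Fin d → ℝ) → ℝ) (hφ0 : ∀ i, i < n → ∀ x, 0 ≤ φ i x)
    (hφ : ∀ i, i < n →
      Measure.map (X i) P = volume.withDensity fun x => ENNReal.ofReal (φ i x))
    (hφκ : ∀ i, i < n → ∀ x ∈ Set.Icc (0 : Fin d → ℝ) 1, φ i x ≤ κ)
    (ℓ : ℕ) (hℓ : 1 ≤ ℓ) (hℓn : (n : ℝ) ≤ 2 ^ (ℓ * d)) :
    sInf {x : ℝ | ∃ m ∈ Mpart d ℓ,
        x = sInf {y : ℝ | ∃ g ∈ VmD d m, y = d2Sq d s g} + m.card * Real.log n / n}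
      ≤ 4 * sInf {x : ℝ | ∃ m ∈ MpartInf d,
          x = sInf {y : ℝ | ∃ g ∈ VmD d m, y = d2Sq d s g} + m.card * Real.log n / n} := by
  classical
  have hnpos : (0:ℝ) < n := by positivity
  have hn4 : (4:ℝ) ≤ n := by exact_mod_cast hn
  have hlog1 : 1 ≤ Real.log n := by
    rw [Real.le_log_iff_exp_le hnpos]
    calc Real.exp 1 ≤ 2.7182818286 := Real.exp_one_lt_d9.le
      _ ≤ 4 := by norm_num
      _ ≤ n := hn4
  have hpen0 : 0 ≤ Real.log n / n := div_nonneg (by linarith) hnpos.le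
  -- the zero function belongs to every V_m
  have hVz : ∀ m : Finset (CubeIdx d),
      (fun p => ∑ K ∈ m, (0:ℝ) * indC d K p) ∈ VmD d m :=
    fun m => ⟨fun _ => 0, fun K _ => le_rfl, rfl⟩
  have hBne : ∀ m : Finset (CubeIdx d),
      {y : ℝ | ∃ g ∈ VmD d m, y = d2Sq d s g}.Nonempty :=
    fun m => ⟨_, _, hVz m, rfl⟩
  have hBbdd : ∀ m : Finset (CubeIdx d),
      BddBelow {y : ℝ | ∃ g ∈ VmD d m, y = d2Sq d s g} := by
    intro m
    refine ⟨0, ?_⟩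
    rintro y ⟨g, hg, rfl⟩
    exact d2Sq_nonneg g
  have hB0 : ∀ m : Finset (CubeIdx d),
      0 ≤ sInf {y : ℝ | ∃ g ∈ VmD d m, y = d2Sq d s g} := by
    intro m
    refine le_csInf (hBne m) ?_
    rintro y ⟨g, hg, rfl⟩
    exact d2Sq_nonneg g
  have hLbdd : BddBelow {x : ℝ | ∃ m ∈ Mpart d ℓ,
      x = sInf {y : ℝ | ∃ g ∈ VmD d m, y = d2Sq d s g} + m.card * Real.log n / n} := by
    refine ⟨0, ?_⟩
    rintro x ⟨m, hm, rfl⟩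
    have : 0 ≤ (m.card : ℝ) * Real.log n / n := by
      rw [mul_div_assoc]
      exact mul_nonneg (Nat.cast_nonneg _) hpen0
    linarith [hB0 m]
  have key : ∀ m : Finset (CubeIdx d), m ∈ MpartInf d →
      sInf {x : ℝ | ∃ m ∈ Mpart d ℓ,
        x = sInf {y : ℝ | ∃ g ∈ VmD d m, y = d2Sq d s g} + m.card * Real.log n / n}
      ≤ 4 * (sInf {y : ℝ | ∃ g ∈ VmD d m, y = d2Sq d s g}
          + m.card * Real.log n / n) := by
    intro m hm
    obtain ⟨ℓ₀, hℓ₀⟩ := Set.mem_iUnion.1 hm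
    obtain ⟨m', hm'1, hm'2, hm'3⟩ := IsPartOf.trunc hℓ₀ ℓ
    set T : Finset (CubeIdx d) := m'.filter (fun K => K ∉ m) with hT
    -- auxiliary bound on each truncated cube
    have each : ∀ K ∈ T, ∫ p in unitSq d, s p.1 p.2 * indC d K p
        ≤ Real.log n / n := by
      intro K hK
      have hKm' : K ∈ m' := (Finset.mem_filter.1 hK).1
      have hKnm : K ∉ m := (Finset.mem_filter.1 hK).2
      have hKl : K.1 = ℓ := by
        rcases hm'3 K hKm' with h | h
        · exact absurd h hKnm
        · simpa [rootC] using h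
      calc ∫ p in unitSq d, s p.1 p.2 * indC d K p
          ≤ (1:ℝ)/2^(K.1 * d) := bound_indC hsm hs0 hs1 hd K
        _ = (1:ℝ)/2^(ℓ * d) := by rw [hKl]
        _ ≤ (1:ℝ)/n := by
            apply one_div_le_one_div_of_le hnpos hℓn
        _ ≤ Real.log n / n := by gcongr
    -- for every g in V_m, the truncated projection is close
    have sub : ∀ g ∈ VmD d m,
        sInf {y : ℝ | ∃ g' ∈ VmD d m', y = d2Sq d s g'}
          ≤ d2Sq d s g + (m.card : ℝ) * (Real.log n / n) := by
      rintro g ⟨a, ha0, rfl⟩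
      set a' : CubeIdx d → ℝ := fun K => if K ∈ m then a K else 0 with ha'
      have ha'0 : ∀ K ∈ m', 0 ≤ a' K := by
        intro K _
        show (0:ℝ) ≤ if K ∈ m then a K else 0
        split
        · exact ha0 _ ‹_›
        · exact le_rfl
      have hg' : (fun p => ∑ K ∈ m', a' K * indC d K p) ∈ VmD d m' := ⟨a', ha'0, rfl⟩
      refine le_trans (csInf_le (hBbdd m') ⟨_, hg', rfl⟩) ?_
      have step1 : d2Sq d s (fun p => ∑ K ∈ m', a' K * indC d K p) ≤
          ∫ p in unitSq d, ((Real.sqrt (s p.1 p.2) - ∑ K ∈ m, a K * indC d K p)^2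
            + ∑ K ∈ T, s p.1 p.2 * indC d K p) := by
        unfold d2Sq
        refine setIntegral_mono_on (integrable_Fg hsm hs0 hs1 a' m')
          ((integrable_Fg hsm hs0 hs1 a m).add
            (integrable_finset_sum T (fun K _ => integrable_s_indC hsm hs0 hs1 K)))
          measurableSet_unitSq ?_
        intro p hp
        show (Real.sqrt (s p.1 p.2) - ∑ K ∈ m', a' K * indC d K p)^2
          ≤ (Real.sqrt (s p.1 p.2) - ∑ K ∈ m, a K * indC d K p)^2
            + ∑ K ∈ T, s p.1 p.2 * indC d K p
        have hq := mem_cubeSet_rootC hp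
        obtain ⟨K₀, hK₀m', hqK₀⟩ := hm'1.cover _ hq
        have hval' : (∑ K ∈ m', a' K * indC d K p) = a' K₀ :=
          sum_pc_eval hm'1.disj a' hK₀m' hqK₀
        have hsum0 : 0 ≤ ∑ K ∈ T, s p.1 p.2 * indC d K p :=
          Finset.sum_nonneg (fun K _ => mul_nonneg (hs0 _ _) (indC_nonneg _ _))
        by_cases hK₀ : K₀ ∈ m
        · have hvalg : (∑ K ∈ m, a K * indC d K p) = a K₀ :=
            sum_pc_eval hℓ₀.disj a hK₀ hqK₀
          have haa : a' K₀ = a K₀ := by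
            show (if K₀ ∈ m then a K₀ else 0) = a K₀
            rw [if_pos hK₀]
          rw [hval', hvalg, haa]
          exact le_add_of_nonneg_right hsum0
        · have haa : a' K₀ = 0 := by
            show (if K₀ ∈ m then a K₀ else 0) = 0
            rw [if_neg hK₀]
          rw [hval', haa]
          have h₁ : (Real.sqrt (s p.1 p.2) - 0)^2 = s p.1 p.2 := by
            rw [sub_zero, Real.sq_sqrt (hs0 _ _)]
          rw [h₁]
          have hTK : K₀ ∈ T := Finset.mem_filter.2 ⟨hK₀m', hK₀⟩
          have h2 : s p.1 p.2 ≤ ∑ K ∈ T, s p.1 p.2 * indC d K p := by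
            have h3 : s p.1 p.2 * indC d K₀ p ≤ ∑ K ∈ T, s p.1 p.2 * indC d K p :=
              Finset.single_le_sum (f := fun K => s p.1 p.2 * indC d K p)
                (fun K _ => mul_nonneg (hs0 _ _) (indC_nonneg _ _)) hTK
            rwa [indC_of_mem hqK₀, mul_one] at h3
          linarith [sq_nonneg (Real.sqrt (s p.1 p.2) - ∑ K ∈ m, a K * indC d K p)]
      have step2 : ∫ p in unitSq d,
          ((Real.sqrt (s p.1 p.2) - ∑ K ∈ m, a K * indC d K p)^2
            + ∑ K ∈ T, s p.1 p.2 * indC d K p)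
          = d2Sq d s (fun p => ∑ K ∈ m, a K * indC d K p)
            + ∑ K ∈ T, ∫ p in unitSq d, s p.1 p.2 * indC d K p := by
        rw [integral_add (integrable_Fg hsm hs0 hs1 a m)
          (integrable_finset_sum T (fun K _ => integrable_s_indC hsm hs0 hs1 K)),
          integral_finset_sum T (fun K _ => integrable_s_indC hsm hs0 hs1 K)]
        rfl
      have step3 : ∑ K ∈ T, ∫ p in unitSq d, s p.1 p.2 * indC d K p
          ≤ (m.card : ℝ) * (Real.log n / n) := by
        calc ∑ K ∈ T, ∫ p in unitSq d, s p.1 p.2 * indC d K p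
            ≤ ∑ _K ∈ T, Real.log n / n := Finset.sum_le_sum each
          _ = (T.card : ℝ) * (Real.log n / n) := by
              rw [Finset.sum_const, nsmul_eq_mul]
          _ ≤ (m.card : ℝ) * (Real.log n / n) := by
              apply mul_le_mul_of_nonneg_right _ hpen0
              have h1 : T.card ≤ m'.card := Finset.card_filter_le _ _
              exact_mod_cast h1.trans hm'2
      linarith [step1, step2, step3]
    -- infimum form of `sub`
    have hBm' : sInf {y : ℝ | ∃ g' ∈ VmD d m', y = d2Sq d s g'}
        ≤ sInf {y : ℝ | ∃ g ∈ VmD d m, y = d2Sq d s g}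
          + (m.card : ℝ) * (Real.log n / n) := by
      have : sInf {y : ℝ | ∃ g' ∈ VmD d m', y = d2Sq d s g'}
          - (m.card : ℝ) * (Real.log n / n)
          ≤ sInf {y : ℝ | ∃ g ∈ VmD d m, y = d2Sq d s g} := by
        refine le_csInf (hBne m) ?_
        rintro y ⟨g, hg, rfl⟩
        linarith [sub g hg]
      linarith
    have hle : sInf {x : ℝ | ∃ m ∈ Mpart d ℓ,
        x = sInf {y : ℝ | ∃ g ∈ VmD d m, y = d2Sq d s g} + m.card * Real.log n / n}
        ≤ sInf {y : ℝ | ∃ g' ∈ VmD d m', y = d2Sq d s g'}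
          + m'.card * Real.log n / n :=
      csInf_le hLbdd ⟨m', hm'1, rfl⟩
    have hcard : (m'.card : ℝ) ≤ (m.card : ℝ) := by exact_mod_cast hm'2
    have hpen_eq : ∀ c : ℕ, (c:ℝ) * Real.log n / n = (c:ℝ) * (Real.log n / n) :=
      fun c => mul_div_assoc _ _ _
    rw [hpen_eq m'.card] at hle
    rw [hpen_eq m.card]
    have := hB0 m
    nlinarith [hBm', hle, hB0 m, hpen0, Nat.cast_nonneg (α := ℝ) m.card]
  -- conclude
  have hrootInf : ({rootC d} : Finset (CubeIdx d)) ∈ MpartInf d :=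
    Set.mem_iUnion.2 ⟨1, IsPartOf.leaf 1 (rootC d)⟩
  have hRne : {x : ℝ | ∃ m ∈ MpartInf d,
      x = sInf {y : ℝ | ∃ g ∈ VmD d m, y = d2Sq d s g}
        + m.card * Real.log n / n}.Nonempty :=
    ⟨_, {rootC d}, hrootInf, rfl⟩
  have final : sInf {x : ℝ | ∃ m ∈ Mpart d ℓ,
      x = sInf {y : ℝ | ∃ g ∈ VmD d m, y = d2Sq d s g} + m.card * Real.log n / n} / 4
      ≤ sInf {x : ℝ | ∃ m ∈ MpartInf d,
        x = sInf {y : ℝ | ∃ g ∈ VmD d m, y = d2Sq d s g} + m.card * Real.log n / n} := by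
    refine le_csInf hRne ?_
    rintro x ⟨m, hm, rfl⟩
    linarith [key m hm]
  linarith [final]
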